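/- For all n ≥ 1 and k ≥ 1, p^k_n = p^{k−1}_n + ∑_{s=0}^{n−1} C(n,s) · p^{k−1}_s, where p^k_n := ∑_{s=0}^{n} C(n,s) · J^0_s · k^{n−s}. -/

import Mathlib

/-- Stirling numbers of the second kind. -/
def stirling : ℕ → ℕ → ℕ
  | 0, 0 => 1
  | 0, _ + 1 => 0
  | _ + 1, 0 => 0
  | n + 1, s + 1 => (s + 1) * stirling n (s + 1) + stirling n s

/-- `J k n`: the number of barred preferential arrangements of an `n`-set with `k` bars,
given by its closed form `∑ S(n,s)·s!·C(k+s,s)`. -/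
def J (k n : ℕ) : ℕ :=
  ∑ s ∈ Finset.range (n + 1), stirling n s * s.factorial * (k + s).choose s

/-- `p k n`: barred preferential arrangements with `k` bars, one free section and
`k` restricted sections. -/
def p (k n : ℕ) : ℕ :=
  ∑ s ∈ Finset.range (n + 1), n.choose s * J 0 s * k ^ (n - s)

lemma key_p_rec (k n : ℕ) : p (k + 1) n = ∑ s ∈ Finset.range (n + 1), n.choose s * p k s := by
  unfold p
  simp only [Finset.mul_sum, ← Nat.Ico_zero_eq_range]
  conv_rhs => rw [← Finset.sum_Ico_Ico_comm]
  symm; apply Finset.sum_congr rfl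
  intro t ht
  simp only [Finset.mem_Ico] at ht
  have htn : t ≤ n := by omega
  rw [Finset.sum_Ico_eq_sum_range]
  have h1 : n + 1 - t = n - t + 1 := by omega
  rw [h1]
  have h2 : ∀ m ∈ Finset.range (n - t + 1),
      n.choose (t + m) * ((t + m).choose t * J 0 t * k ^ (t + m - t)) =
      n.choose t * J 0 t * (k ^ m * 1 ^ (n - t - m) * (n - t).choose m) := by
    intro m hm
    simp only [Finset.mem_range] at hm
    have hmn : t + m ≤ n := by omega
    have h3 := Nat.choose_mul (n := n) (k := t + m) (s := t) (Nat.le_add_right t m)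
    rw [show t + m - t = m from by omega] at h3 ⊢
    rw [show n.choose (t + m) * ((t + m).choose t * J 0 t * k ^ m)
        = n.choose (t + m) * (t + m).choose t * (J 0 t * k ^ m) from by ring, h3, one_pow]
    ring
  rw [Finset.sum_congr rfl h2, ← Finset.mul_sum]
  congr 1
  have := add_pow k 1 (n - t)
  simpa using this.symm

theorem stmt_9 (n k : ℕ) (hn : 1 ≤ n) (hk : 1 ≤ k) :
    p k n = p (k - 1) n + ∑ s ∈ Finset.range n, n.choose s * p (k - 1) s := by
  have h : k = (k - 1) + 1 := by omega
  rw [h, key_p_rec, Finset.sum_range_succ, Nat.choose_self, one_mul, add_comm, Nat.add_sub_cancel]
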